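/- Let A be a type and f₀, …, f_m : ℕ → A be functions with moduli of convergence L₀, …, L_m respectively. Then the left-associated iterated join L₀ ⊔ L₁ ⊔ ⋯ ⊔ L_m is a modulus of convergence simultaneously for every f_i (0 ≤ i ≤ m): for every h ≥ id and every z, each f_i satisfies f_i↓[(L₀⊔⋯⊔L_m) h z, h ((L₀⊔⋯⊔L_m) h z)]. -/
import Mathlib


/-- `f↓[n,m]`: the function `f` is constant on the interval `[n,m]`. -/
def ConvOn {A : Type*} (f : ℕ → A) (n m : ℕ) : Prop :=
  ∀ x, n ≤ x → x ≤ m → f x = f n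

/-- `h ≥ id`. -/
def GeId (h : ℕ → ℕ) : Prop := ∀ x, x ≤ h x

/-- `M` is a modulus of convergence for `f`. -/
def IsModulus {A : Type*} (M : (ℕ → ℕ) → ℕ → ℕ) (f : ℕ → A) : Prop :=
  (∀ h, GeId h → GeId (M h)) ∧
  (∀ h, GeId h → ∀ z, ConvOn f (M h z) (h (M h z)))

/-- The join of two moduli: `(M ⊔ N) h z = N h (M (h ∘ N h) z)`. -/
def joinMod (M N : (ℕ → ℕ) → ℕ → ℕ) : (ℕ → ℕ) → ℕ → ℕ :=
  fun h z => N h (M (h ∘ N h) z)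

/-- The left-associated iterated join `L₀ ⊔ L₁ ⊔ ⋯ ⊔ L_m`. -/
def iterJoin : {m : ℕ} → (Fin (m + 1) → (ℕ → ℕ) → ℕ → ℕ) → (ℕ → ℕ) → ℕ → ℕ
  | 0, L => L 0
  | m + 1, L => joinMod (iterJoin (fun i => L i.castSucc)) (L (Fin.last (m + 1)))

/-- If `L i` is a modulus of convergence for `f i` for each `i ≤ m`, then the
left-associated iterated join `L₀ ⊔ ⋯ ⊔ L_m` is a modulus of convergence
simultaneously for every `f i`. -/
lemma convOn_sub {A : Type*} {f : ℕ → A} {a b c : ℕ} (h : ConvOn f a c)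
    (hab : a ≤ b) (hbc : b ≤ c) : ConvOn f b c := by
  intro x hbx hxc
  rw [h x (hab.trans hbx) hxc, h b hab hbc]

lemma joinMod_geId {M N : (ℕ → ℕ) → ℕ → ℕ}
    (hM : ∀ h, GeId h → GeId (M h)) (hN : ∀ h, GeId h → GeId (N h)) :
    ∀ h, GeId h → GeId (joinMod M N h) := by
  intro h hh z
  have hNh := hN h hh
  have hMh := hM (h ∘ N h) (fun x => (hNh x).trans (hh _))
  exact (hMh z).trans (hNh _)

lemma joinMod_left {A : Type*} {M N : (ℕ → ℕ) → ℕ → ℕ} {f : ℕ → A}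
    (hM : IsModulus M f) (hN : ∀ h, GeId h → GeId (N h)) :
    IsModulus (joinMod M N) f := by
  refine ⟨joinMod_geId hM.1 hN, fun h hh z => ?_⟩
  have hNh := hN h hh
  have key := hM.2 (h ∘ N h) (fun x => (hNh x).trans (hh _)) z
  exact convOn_sub key (hNh _) (hh _)

lemma joinMod_right {A : Type*} {M N : (ℕ → ℕ) → ℕ → ℕ} {g : ℕ → A}
    (hM : ∀ h, GeId h → GeId (M h)) (hN : IsModulus N g) :
    IsModulus (joinMod M N) g :=
  ⟨joinMod_geId hM hN.1, fun h hh _ => hN.2 h hh _⟩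

theorem iterated_join_simultaneous_modulus {A : Type*} (m : ℕ)
    (f : Fin (m + 1) → ℕ → A) (L : Fin (m + 1) → (ℕ → ℕ) → ℕ → ℕ)
    (hL : ∀ i, IsModulus (L i) (f i)) :
    ∀ i : Fin (m + 1), IsModulus (iterJoin L) (f i) := by
  induction m with
  | zero =>
    intro i
    have : i = 0 := Fin.fin_one_eq_zero i
    subst this
    exact hL 0
  | succ n ih =>
    have IH := ih (fun i => f i.castSucc) (fun i => L i.castSucc)
      (fun i => hL i.castSucc)
    have hgeid : ∀ h, GeId h → GeId (iterJoin (fun i => L (Fin.castSucc i)) h) :=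
      (IH 0).1
    intro i
    refine Fin.lastCases ?_ ?_ i
    · exact joinMod_right hgeid (hL (Fin.last (n + 1)))
    · intro j
      exact joinMod_left (IH j) (hL (Fin.last (n + 1))).1
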